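/- Let F ∈ D_j be a nonzero form and A_F = R/Ann(F). Then the Hilbert function of A_F is symmetric: H(A_F)_i = H(A_F)_{j−i} for all 0 ≤ i ≤ j. -/

import Mathlib

open MvPolynomial

/-- The partial derivative endomorphisms commute. -/
theorem pderiv_endo_comm {K : Type*} [CommSemiring K] {r : ℕ} (i j : Fin r)
    (p : MvPolynomial (Fin r) K) :
    pderiv i (pderiv j p) = pderiv j (pderiv i p) := by
  induction p using MvPolynomial.induction_on with
  | C a => simp
  | add p q hp hq => simp [hp, hq]
  | mul_X p k hp =>
      have hX : ∀ a b c : Fin r,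
          pderiv a (pderiv b (X c : MvPolynomial (Fin r) K)) = 0 := by
        intro a b c
        rcases eq_or_ne c b with h | h
        · subst h; rw [pderiv_X_self]; exact pderiv_one
        · rw [pderiv_X_of_ne h, map_zero]
      simp only [pderiv_mul, map_add, pderiv_mul, hp, hX]
      ring

/-- The apolarity action of `R = K[x_1,…,x_r]` on `D = K[X_1,…,X_r]` by
partial differentiation, as an algebra map to endomorphisms. -/
noncomputable def apolHom (K : Type*) [CommSemiring K] (r : ℕ) :
    MvPolynomial (Fin r) K →ₐ[K] Module.End K (MvPolynomial (Fin r) K) :=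
  letI : CommSemiring
      (Algebra.adjoin K (Set.range fun i : Fin r =>
        ((pderiv i).toLinearMap : Module.End K (MvPolynomial (Fin r) K)))) :=
    Algebra.adjoinCommSemiringOfComm K (by
      rintro a ⟨i, rfl⟩ b ⟨j, rfl⟩
      exact LinearMap.ext fun p => pderiv_endo_comm i j p)
  (Algebra.adjoin K _).val.comp
    (aeval fun i : Fin r =>
      (⟨(pderiv i).toLinearMap, Algebra.subset_adjoin (Set.mem_range_self i)⟩ :
        Algebra.adjoin K (Set.range fun i : Fin r =>
          ((pderiv i).toLinearMap : Module.End K (MvPolynomial (Fin r) K)))))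

/-- `h ∘ F`, the differentiation action. -/
noncomputable def apol {K : Type*} [CommSemiring K] {r : ℕ}
    (h F : MvPolynomial (Fin r) K) : MvPolynomial (Fin r) K :=
  apolHom K r h F

/-- The annihilator ideal of a form `F`. -/
noncomputable def annIdeal {K : Type*} [CommSemiring K] {r : ℕ}
    (F : MvPolynomial (Fin r) K) : Ideal (MvPolynomial (Fin r) K) where
  carrier := {h | apol h F = 0}
  add_mem' := by
    intro a b ha hb
    simp only [Set.mem_setOf_eq, apol, map_add, LinearMap.add_apply] at *
    rw [ha, hb, add_zero]
  zero_mem' := by simp [apol]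
  smul_mem' := by
    intro c x hx
    simp only [Set.mem_setOf_eq, apol, smul_eq_mul, map_mul, Module.End.mul_apply] at *
    rw [hx, map_zero]

/-- The annihilator ideal of a set of forms. -/
noncomputable def annSet {K : Type*} [CommSemiring K] {r : ℕ}
    (W : Set (MvPolynomial (Fin r) K)) : Ideal (MvPolynomial (Fin r) K) where
  carrier := {h | ∀ F ∈ W, apol h F = 0}
  add_mem' := by
    intro a b ha hb F hF
    have h1 := ha F hF
    have h2 := hb F hF
    simp only [apol] at h1 h2 ⊢
    rw [map_add, LinearMap.add_apply, h1, h2, add_zero]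
  zero_mem' := by intro F hF; simp [apol]
  smul_mem' := by
    intro c x hx F hF
    have h1 := hx F hF
    simp only [apol] at h1 ⊢
    rw [smul_eq_mul, map_mul, Module.End.mul_apply, h1, map_zero]

/-- `h ↦ h ∘ F` as a `K`-linear map. -/
noncomputable def apolMap {K : Type*} [CommSemiring K] {r : ℕ}
    (F : MvPolynomial (Fin r) K) :
    MvPolynomial (Fin r) K →ₗ[K] MvPolynomial (Fin r) K where
  toFun h := apol h F
  map_add' a b := by simp [apol, map_add]
  map_smul' c a := by simp [apol, map_smul]

/-- `R_u ∘ F`, the space of `u`-th order partial derivatives of `F`. -/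
noncomputable def derivSpace {K : Type*} [CommSemiring K] {r : ℕ}
    (F : MvPolynomial (Fin r) K) (u : ℕ) :
    Submodule K (MvPolynomial (Fin r) K) :=
  Submodule.map (apolMap F) (homogeneousSubmodule (Fin r) K u)

/-- The degree-`i` part of an ideal `I`, as a subspace of `R_i`. -/
noncomputable def idealPiece {K : Type*} [CommSemiring K] {r : ℕ}
    (I : Ideal (MvPolynomial (Fin r) K)) (i : ℕ) :
    Submodule K (homogeneousSubmodule (Fin r) K i) :=
  Submodule.comap (homogeneousSubmodule (Fin r) K i).subtype (I.restrictScalars K)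

/-- The Hilbert function of `R/I` in degree `i` (for a homogeneous ideal `I`):
`dim_K (R_i / I_i)`. -/
noncomputable def hilb {K : Type*} [Field K] {r : ℕ}
    (I : Ideal (MvPolynomial (Fin r) K)) (i : ℕ) : ℕ :=
  Module.finrank K ((homogeneousSubmodule (Fin r) K i) ⧸ idealPiece I i)
section Test
variable {K : Type*} [CommSemiring K] {r : ℕ}

lemma apolHom_X (a : Fin r) :
    apolHom K r (X a) = ((pderiv a).toLinearMap : Module.End K (MvPolynomial (Fin r) K)) := by
  simp [apolHom]

lemma apol_X (a : Fin r) (F : MvPolynomial (Fin r) K) : apol (X a) F = pderiv a F := by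
  simp [apol, apolHom]

lemma apol_one (F : MvPolynomial (Fin r) K) : apol (1 : MvPolynomial (Fin r) K) F = F := by
  simp [apol, map_one]

lemma apol_mul (g h F : MvPolynomial (Fin r) K) : apol (g * h) F = apol g (apol h F) := by
  simp [apol, map_mul, Module.End.mul_apply]

lemma apol_X_pow (a : Fin r) (n : ℕ) (F : MvPolynomial (Fin r) K) :
    apol (X a ^ n) F = (pderiv a)^[n] F := by
  simp [apol, map_pow, Module.End.pow_apply, apolHom_X]

end Test
section Test2
variable {K : Type*} [CommSemiring K] {r : ℕ}

lemma pderiv_iterate_monomial (a : Fin r) (n : ℕ) (β : Fin r →₀ ℕ) (b : K) :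
    (pderiv a)^[n] (monomial β b)
      = monomial (β - Finsupp.single a n) (((β a).descFactorial n : K) * b) := by
  induction n with
  | zero => simp
  | succ n ih =>
      rw [Function.iterate_succ_apply', ih, pderiv_monomial]
      rw [Nat.descFactorial_succ]
      congr 1
      · rw [tsub_tsub, ← Finsupp.single_add]
      · have ha : (β - Finsupp.single a n) a = β a - n := by
          simp [Finsupp.tsub_apply]
        rw [ha]
        push_cast [Nat.cast_mul]
        ring

lemma apol_monomial_monomial (α : Fin r →₀ ℕ) (β : Fin r →₀ ℕ) (b : K) :
    apol (monomial α (1 : K)) (monomial β b)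
      = monomial (β - α) ((α.prod fun i n => ((β i).descFactorial n : K)) * b) := by
  induction α using Finsupp.induction generalizing β b with
  | zero => simp [apol_one]
  | single_add a n f ha hn ih =>
      have hmul : (monomial (Finsupp.single a n + f) (1 : K))
          = monomial (Finsupp.single a n) 1 * monomial f 1 := by
        rw [monomial_mul, one_mul]
      rw [hmul, apol_mul, ih, ← X_pow_eq_monomial, apol_X_pow, pderiv_iterate_monomial]
      have hfa : (β - f) a = β a := by
        simp [Finsupp.tsub_apply, Finsupp.notMem_support_iff.mp ha]
      rw [hfa]
      congr 1
      · rw [tsub_tsub, add_comm (Finsupp.single a n) f]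
      · rw [Finsupp.prod_add_index_of_disjoint, Finsupp.prod_single_index]
        · ring
        · simp
        · simpa [Finsupp.support_single_ne_zero a hn, Finset.disjoint_singleton_left] using ha

end Test2
section Test3
variable {K : Type*} [CommSemiring K] {r : ℕ}

lemma finsupp_eq_of_le_of_degree_eq {α β : Fin r →₀ ℕ} (h : α ≤ β)
    (hd : α.degree = β.degree) : α = β := by
  obtain ⟨γ, rfl⟩ := exists_add_of_le h
  have hdeg : (α + γ).degree = α.degree + γ.degree := by
    simp [Finsupp.degree_eq_weight_one, map_add]
  have : γ.degree = 0 := by omega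
  rw [Finsupp.degree_eq_zero_iff] at this
  simp [this]

/-- off-diagonal same-degree vanishing -/
lemma apol_monomial_monomial_eq_zero {α β : Fin r →₀ ℕ} (b : K)
    (hd : α.degree = β.degree) (hne : α ≠ β) :
    apol (monomial α (1 : K)) (monomial β b) = 0 := by
  rw [apol_monomial_monomial]
  have hle : ¬ α ≤ β := fun h => hne (finsupp_eq_of_le_of_degree_eq h hd)
  obtain ⟨i, hi⟩ : ∃ i, β i < α i := by
    by_contra hc
    push_neg at hc
    exact hle fun i => hc i
  have hi' : i ∈ α.support := by
    rw [Finsupp.mem_support_iff]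
    omega
  have : (α.prod fun i n => ((β i).descFactorial n : K)) = 0 := by
    rw [Finsupp.prod]
    refine Finset.prod_eq_zero hi' ?_
    simp [Nat.descFactorial_eq_zero_iff_lt.mpr hi]
  rw [this, zero_mul, map_zero]

/-- diagonal value -/
lemma apol_monomial_monomial_self (α : Fin r →₀ ℕ) (b : K) :
    apol (monomial α (1 : K)) (monomial α b)
      = C ((↑(α.prod fun _ n => Nat.factorial n) : K) * b) := by
  rw [apol_monomial_monomial, tsub_self, monomial_zero']
  congr 1
  rw [Finsupp.prod, Finsupp.prod, Nat.cast_prod]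
  congr 1
  exact Finset.prod_congr rfl fun i _ => by rw [Nat.descFactorial_self]

end Test3
section Test4
variable {K : Type*} [CommSemiring K] {r : ℕ}

lemma apol_sum_right {ι : Type*} (s : Finset ι) (f : ι → MvPolynomial (Fin r) K)
    (p : MvPolynomial (Fin r) K) :
    apol p (∑ i ∈ s, f i) = ∑ i ∈ s, apol p (f i) :=
  map_sum (apolHom K r p) f s

lemma apol_sum_left {ι : Type*} (s : Finset ι) (f : ι → MvPolynomial (Fin r) K)
    (F : MvPolynomial (Fin r) K) :
    apol (∑ i ∈ s, f i) F = ∑ i ∈ s, apol (f i) F := by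
  simp only [apol, map_sum, LinearMap.coe_sum, Finset.sum_apply]

lemma apol_smul_left (c : K) (p F : MvPolynomial (Fin r) K) :
    apol (c • p) F = c • apol p F := by
  simp only [apol, map_smul, LinearMap.smul_apply]

lemma prod_descFactorial_eq_zero {α β : Fin r →₀ ℕ} (h : ¬ α ≤ β) :
    (α.prod fun i n => ((β i).descFactorial n : K)) = 0 := by
  obtain ⟨i, hi⟩ : ∃ i, β i < α i := by
    by_contra hc
    push_neg at hc
    exact h fun i => hc i
  have hi' : i ∈ α.support := by
    rw [Finsupp.mem_support_iff]
    omega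
  rw [Finsupp.prod]
  refine Finset.prod_eq_zero hi' ?_
  simp [Nat.descFactorial_eq_zero_iff_lt.mpr hi]

lemma isHomogeneous_apol_monomial {F : MvPolynomial (Fin r) K} {n : ℕ}
    (hF : F.IsHomogeneous n) (α : Fin r →₀ ℕ) :
    (apol (monomial α (1 : K)) F).IsHomogeneous (n - α.degree) := by
  rw [F.as_sum, apol_sum_right]
  apply MvPolynomial.IsHomogeneous.sum
  intro β hβ
  rw [apol_monomial_monomial]
  by_cases hle : α ≤ β
  · apply isHomogeneous_monomial
    have hβd : β.degree = n := by
      have := hF (mem_support_iff.mp hβ)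
      rwa [Pi.one_def, ← Finsupp.degree_eq_weight_one] at this
    obtain ⟨γ, rfl⟩ := exists_add_of_le hle
    rw [add_tsub_cancel_left]
    have : (α + γ).degree = α.degree + γ.degree := by
      simp [Finsupp.degree_eq_weight_one, map_add]
    omega
  · rw [prod_descFactorial_eq_zero hle, zero_mul, map_zero]
    exact isHomogeneous_zero _ _ _

lemma isHomogeneous_apol {p F : MvPolynomial (Fin r) K} {n i : ℕ}
    (hp : p.IsHomogeneous i) (hF : F.IsHomogeneous n) :
    (apol p F).IsHomogeneous (n - i) := by
  rw [p.as_sum, apol_sum_left]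
  apply MvPolynomial.IsHomogeneous.sum
  intro α hα
  have hαd : α.degree = i := by
    have := hp (mem_support_iff.mp hα)
    rwa [Pi.one_def, ← Finsupp.degree_eq_weight_one] at this
  have h1 : monomial α (coeff α p) = coeff α p • monomial α (1 : K) := by
    rw [smul_monomial, smul_eq_mul, mul_one]
  rw [h1, apol_smul_left, smul_eq_C_mul]
  exact (hαd ▸ isHomogeneous_apol_monomial hF α).C_mul _

end Test4

section Test5
variable {K : Type*} [Field K] [CharZero K] {r : ℕ}

lemma eq_zero_of_forall_apol_eq_zero {d : ℕ} {G : MvPolynomial (Fin r) K}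
    (hG : G.IsHomogeneous d)
    (h : ∀ p ∈ homogeneousSubmodule (Fin r) K d, apol p G = 0) : G = 0 := by
  by_contra hne
  obtain ⟨α, hα⟩ := MvPolynomial.support_nonempty.mpr hne
  have hcoeff : coeff α G ≠ 0 := mem_support_iff.mp hα
  have hαd : α.degree = d := by
    have := hG hcoeff
    rwa [Pi.one_def, ← Finsupp.degree_eq_weight_one] at this
  have hp := h _ ((mem_homogeneousSubmodule _ _).mpr (isHomogeneous_monomial 1 hαd))
  have hval : apol (monomial α (1 : K)) G
      = C ((↑(α.prod fun _ n => Nat.factorial n) : K) * coeff α G) := by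
    conv_lhs => rw [G.as_sum]
    rw [apol_sum_right, Finset.sum_eq_single α]
    · exact apol_monomial_monomial_self α _
    · intro β hβ hβne
      have hβd : β.degree = d := by
        have := hG (mem_support_iff.mp hβ)
        rwa [Pi.one_def, ← Finsupp.degree_eq_weight_one] at this
      exact apol_monomial_monomial_eq_zero _ (by omega) (Ne.symm hβne)
    · intro hαn
      exact absurd hα hαn
  rw [hp] at hval
  have : (↑(α.prod fun _ n => Nat.factorial n) : K) * coeff α G = 0 := by
    have := hval.symm
    rwa [← C_0, C_inj] at this
  rcases mul_eq_zero.mp this with h1 | h1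
  · refine absurd h1 (Nat.cast_ne_zero.mpr ?_)
    rw [Finsupp.prod]
    exact Finset.prod_ne_zero_iff.mpr fun i _ => Nat.factorial_ne_zero _
  · exact hcoeff h1

end Test5
section Test6
variable {K : Type*} [CommSemiring K] {r : ℕ}

lemma mem_annIdeal_iff {F p : MvPolynomial (Fin r) K} :
    p ∈ annIdeal F ↔ apol p F = 0 := Iff.rfl

lemma isHomogeneous_eq_C_coeff_zero {Q : MvPolynomial (Fin r) K}
    (hQ : Q.IsHomogeneous 0) : Q = C (coeff 0 Q) := by
  ext m
  rcases eq_or_ne m 0 with rfl | h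
  · simp
  · rw [hQ.coeff_eq_zero (by rwa [Ne, Finsupp.degree_eq_zero_iff])]
    rw [coeff_C, if_neg (Ne.symm h)]

end Test6

section Test7
variable {K : Type*} [Field K] {r : ℕ}

instance homogeneousSubmodule_finiteDimensional (i : ℕ) :
    FiniteDimensional K (homogeneousSubmodule (Fin r) K i) :=
  Submodule.finiteDimensional_of_le (S₂ := restrictTotalDegree (Fin r) K i)
    (fun p hp => (mem_restrictTotalDegree _ _ _).mpr
      ((mem_homogeneousSubmodule _ _).mp hp).totalDegree_le)

lemma hilb_eq_finrank_derivSpace (F : MvPolynomial (Fin r) K) (i : ℕ) :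
    hilb (annIdeal F) i = Module.finrank K (derivSpace F i) := by
  set ρ := (apolMap F).comp (homogeneousSubmodule (Fin r) K i).subtype with hρ
  have hker : LinearMap.ker ρ = idealPiece (annIdeal F) i := by
    ext x
    simp only [LinearMap.mem_ker, hρ, LinearMap.comp_apply, Submodule.subtype_apply,
      idealPiece, Submodule.mem_comap, Submodule.restrictScalars_mem]
    exact Iff.rfl
  have hrange : LinearMap.range ρ = derivSpace F i := by
    rw [hρ, LinearMap.range_comp, Submodule.range_subtype]
    rfl
  rw [hilb, ← hker, ← hrange]
  exact LinearEquiv.finrank_eq (LinearMap.quotKerEquivRange ρ)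

end Test7
section Test8
variable {K : Type*} [Field K] [CharZero K] {r : ℕ}

set_option synthInstance.maxHeartbeats 1000000 in
set_option maxHeartbeats 1000000 in
lemma hilb_le_of_add_eq {F : MvPolynomial (Fin r) K} {j i i' : ℕ}
    (hF : F.IsHomogeneous j) (hij : i + i' = j) :
    hilb (annIdeal F) i' ≤ hilb (annIdeal F) i := by
  classical
  -- the pairing map θ : R_{i'} → Dual (R_i ∘ F)
  set θ : (homogeneousSubmodule (Fin r) K i') →ₗ[K]
      Module.Dual K (derivSpace F i) :=
    { toFun := fun h => (lcoeff K (0 : Fin r →₀ ℕ)) ∘ₗ (apolHom K r h.1) ∘ₗ (derivSpace F i).subtype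
      map_add' := by
        intro a b
        ext G
        simp [map_add, apol]
      map_smul' := by
        intro c a
        ext G
        simp [map_smul, apol] } with hθ
  have hker : LinearMap.ker θ = idealPiece (annIdeal F) i' := by
    ext h
    simp only [LinearMap.mem_ker, idealPiece, Submodule.mem_comap,
      Submodule.restrictScalars_mem, Submodule.subtype_apply, mem_annIdeal_iff]
    constructor
    · intro h0
      -- apol h F is homogeneous of degree j - i' = i; show it is killed by all of R_i
      have hhom : (apol h.1 F).IsHomogeneous i := by
        have := isHomogeneous_apol ((mem_homogeneousSubmodule _ _).mp h.2) hF
        rwa [show j - i' = i by omega] at this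
      refine eq_zero_of_forall_apol_eq_zero hhom ?_
      intro p hp
      -- apol p (apol h F) = apol h (apol p F)
      have hmem : apol p F ∈ derivSpace F i := Submodule.mem_map_of_mem hp
      have h0' := congrArg (fun f => f ⟨apol p F, hmem⟩) h0
      simp only [hθ, LinearMap.coe_mk, AddHom.coe_mk, LinearMap.comp_apply,
        Submodule.subtype_apply, LinearMap.zero_apply] at h0'
      -- h0' : lcoeff 0 (apolHom K r h.1 (apol p F)) = 0
      have hcomm : apol h.1 (apol p F) = apol p (apol h.1 F) := by
        rw [← apol_mul, ← apol_mul, mul_comm]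
      have hQ : (apol p (apol h.1 F)).IsHomogeneous 0 := by
        have hph : (p * h.1).IsHomogeneous (i + i') :=
          ((mem_homogeneousSubmodule _ _).mp hp).mul
            ((mem_homogeneousSubmodule _ _).mp h.2)
        have h2 := isHomogeneous_apol hph hF
        rw [show j - (i + i') = 0 by omega] at h2
        rwa [apol_mul] at h2
      have : apol p (apol h.1 F) = C (coeff 0 (apol p (apol h.1 F))) :=
        isHomogeneous_eq_C_coeff_zero hQ
      rw [this]
      have h00 : coeff 0 (apol p (apol h.1 F)) = 0 := by
        rw [← hcomm]
        exact h0'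
      rw [h00, C_0]
    · intro h0
      ext G
      obtain ⟨g, hg, hG⟩ := G.2
      simp only [hθ, LinearMap.coe_mk, AddHom.coe_mk, LinearMap.comp_apply,
        Submodule.subtype_apply, LinearMap.zero_apply]
      have : (G : MvPolynomial (Fin r) K) = apol g F := hG.symm
      rw [show (apolHom K r h.1) (G : MvPolynomial (Fin r) K) = apol h.1 (G : _) from rfl,
        this, ← apol_mul, mul_comm, apol_mul, h0, ]
      simp [apol]
  haveI hfd : FiniteDimensional K (derivSpace F i) := by
    unfold derivSpace; infer_instance
  haveI : FiniteDimensional K (Module.Dual K (derivSpace F i)) :=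
    Subspace.instModuleDualFiniteDimensional
  calc hilb (annIdeal F) i'
      = Module.finrank K ((homogeneousSubmodule (Fin r) K i') ⧸ LinearMap.ker θ) := by
        rw [hilb, hker]
    _ = Module.finrank K (LinearMap.range θ) :=
        LinearEquiv.finrank_eq (LinearMap.quotKerEquivRange θ)
    _ ≤ Module.finrank K (Module.Dual K (derivSpace F i)) := Submodule.finrank_le _
    _ = Module.finrank K (derivSpace F i) := Subspace.dual_finrank_eq
    _ = hilb (annIdeal F) i := (hilb_eq_finrank_derivSpace F i).symm

end Test8
/-- the Hilbert function of the Artinian Gorenstein algebra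
`A_F = R/Ann F` is symmetric: `H(A_F)_i = H(A_F)_{j-i}` for `0 ≤ i ≤ j`. -/
theorem gorenstein_hilbert_symmetric {K : Type*} [Field K] [CharZero K] {r j : ℕ}
    (F : MvPolynomial (Fin r) K) (hF : F.IsHomogeneous j) (hF0 : F ≠ 0) :
    ∀ i ≤ j, hilb (annIdeal F) i = hilb (annIdeal F) (j - i) := by
  intro i hi
  have h1 : hilb (annIdeal F) (j - i) ≤ hilb (annIdeal F) i :=
    hilb_le_of_add_eq hF (by omega)
  have h2 : hilb (annIdeal F) i ≤ hilb (annIdeal F) (j - i) :=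
    hilb_le_of_add_eq hF (by omega)
  omega
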